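/- Let N = q^k·n^2 be an odd perfect number given in Eulerian form. If n < q, then k = 1. -/

import Mathlib

open ArithmeticFunction Finset
open scoped ArithmeticFunction.sigma

/-- For an odd perfect number `N = q^k * n^2` in Eulerian form,
if `n < q` then `k = 1`. -/
theorem stmt_16 (q k n : ℕ) (hq : q.Prime) (hq1 : q % 4 = 1) (hk1 : k % 4 = 1)
    (hgcd : Nat.gcd q n = 1) (hodd : Odd (q ^ k * n ^ 2))
    (hperf : Nat.Perfect (q ^ k * n ^ 2)) (hlt : n < q) :
    k = 1 := by
  by_contra hk
  have hq5 : 5 ≤ q := by have := hq.two_le; omega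
  have hk5 : 5 ≤ k := by omega
  have hNpos : 0 < q ^ k * n ^ 2 := hperf.2
  have hn0 : 0 < n := by
    rcases Nat.eq_zero_or_pos n with h | h
    · simp [h] at hNpos
    · exact h
  -- σ 1 N = 2 N
  have hσ : σ 1 (q ^ k * n ^ 2) = 2 * (q ^ k * n ^ 2) := by
    rw [sigma_one_apply]
    exact (Nat.perfect_iff_sum_divisors_eq_two_mul hNpos).mp hperf
  have hgcd' : Nat.Coprime q n := hgcd
  have hcop : Nat.Coprime (q ^ k) (n ^ 2) := hgcd'.pow k 2
  have hmul : σ 1 (q ^ k) * σ 1 (n ^ 2) = 2 * (q ^ k * n ^ 2) := by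
    rw [← isMultiplicative_sigma.map_mul_of_coprime hcop, hσ]
  set s := σ 1 (q ^ k) with hs
  have hsform : s = ∑ j ∈ Finset.range (k + 1), q ^ j := sigma_one_apply_prime_pow hq
  -- s = q * t + 1
  have hsdecomp : s = q * (∑ j ∈ Finset.range k, q ^ j) + 1 := by
    rw [hsform, Finset.sum_range_succ' (fun j => q ^ j) k]
    simp [Finset.mul_sum, pow_succ, mul_comm]
  -- coprime s q
  have hscop : Nat.Coprime s (q ^ k) := by
    apply Nat.Coprime.pow_right
    rw [Nat.coprime_comm, hq.coprime_iff_not_dvd]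
    intro hdvd
    rw [hsdecomp] at hdvd
    have h2 : q ∣ 1 := (Nat.dvd_add_right ⟨_, rfl⟩).mp hdvd
    exact absurd (Nat.le_of_dvd one_pos h2) (by omega)
  -- s ∣ 2 * n ^ 2
  have hdvd : s ∣ 2 * n ^ 2 := by
    have h1 : s ∣ q ^ k * (2 * n ^ 2) := by
      rw [show q ^ k * (2 * n ^ 2) = 2 * (q ^ k * n ^ 2) by ring, ← hmul]
      exact Dvd.intro _ rfl
    exact Nat.Coprime.dvd_of_dvd_mul_left hscop h1
  -- q ^ k < s
  have hsgt : q ^ k < s := by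
    have hqk : q ^ k ≤ q * ∑ j ∈ Finset.range k, q ^ j := by
      have h1 : q ^ k = q * q ^ (k - 1) := by
        rw [← pow_succ']
        congr 1
        omega
      rw [h1]
      exact Nat.mul_le_mul_left q
        (Finset.single_le_sum (fun i _ => Nat.zero_le _) (Finset.mem_range.mpr (by omega)))
    omega
  have hsle : s ≤ 2 * n ^ 2 := Nat.le_of_dvd (by positivity) hdvd
  -- contradiction
  have h1 : 2 * n ^ 2 < 2 * q ^ 2 := by
    have := Nat.pow_lt_pow_left hlt (n := 2) (by norm_num)
    omega
  have h2 : 2 * q ^ 2 ≤ q ^ 3 := by nlinarith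
  have h3 : q ^ 3 ≤ q ^ k := Nat.pow_le_pow_right (by omega) (by omega)
  omega
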